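/- Let B be a connected building set on [n]. Then: (a) every B-tree ≼ has a unique lexicographically minimal linear extension w(≼), and w(≼) belongs to S_n(B); (b) distinct B-trees have distinct lexicographically minimal linear extensions; and (c) every permutation in S_n(B) is the lexicographically minimal linear extension of some B-tree. In particular, ≼ ↦ w(≼) is a bijection from the set of B-trees onto the set S_n(B) of B-permutations. -/

import Mathlib

open Classical

/-- The prefix set `{w(1), …, w(i)}`. -/
def prefixSet {n : ℕ} (w : Equiv.Perm (Fin n)) (i : Fin n) : Finset (Fin n) :=
  (Finset.univ.filter fun j => j ≤ i).image w

/-- A building set on `[n]`. -/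
def IsBuildingSet {n : ℕ} (B : Finset (Finset (Fin n))) : Prop :=
  (∀ I ∈ B, I.Nonempty) ∧
  (∀ I ∈ B, ∀ J ∈ B, (I ∩ J).Nonempty → I ∪ J ∈ B) ∧
  (∀ i : Fin n, {i} ∈ B)

/-- `w` is a `B`-permutation. -/
def IsBPerm {n : ℕ} (B : Finset (Finset (Fin n))) (w : Equiv.Perm (Fin n)) : Prop :=
  ∀ i : Fin n, ∃ I ∈ B, I ⊆ prefixSet w i ∧ w i ∈ I ∧
    ∃ m ∈ I, ∀ x ∈ prefixSet w i, x ≤ m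

/-- The relation `r` (with `r a b` meaning `a ≼ b`) is a `B`-tree. -/
def IsBTreeRel {n : ℕ} (B : Finset (Finset (Fin n))) (r : Fin n → Fin n → Prop) : Prop :=
  (∀ a, r a a) ∧
  (∀ a b, r a b → r b a → a = b) ∧
  (∀ a b c, r a b → r b c → r a c) ∧
  (∃ g, ∀ a, r a g) ∧
  (∀ a b c, r a b → r a c → r b c ∨ r c b) ∧
  (∀ i : Fin n, (Finset.univ.filter fun j => r j i) ∈ B) ∧
  (∀ S : Finset (Fin n), 2 ≤ S.card →
    (∀ a ∈ S, ∀ b ∈ S, a ≠ b → ¬ r a b ∧ ¬ r b a) →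
    S.biUnion (fun i => Finset.univ.filter fun j => r j i) ∉ B)

/-- `w` is a linear extension of the relation `r`. -/
def IsLinExt {n : ℕ} (r : Fin n → Fin n → Prop) (w : Equiv.Perm (Fin n)) : Prop :=
  ∀ i j : Fin n, r (w i) (w j) → i ≤ j

/-- `w` is the lexicographically minimal linear extension of `r`. -/
def IsLexMinLinExt {n : ℕ} (r : Fin n → Fin n → Prop) (w : Equiv.Perm (Fin n)) : Prop :=
  IsLinExt r w ∧ ∀ u : Equiv.Perm (Fin n), IsLinExt r u →
    w = u ∨ ∃ i : Fin n, (∀ j : Fin n, j < i → w j = u j) ∧ w i < u i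

namespace BTreeAux
variable {n : ℕ}

lemma mem_prefixSet {w : Equiv.Perm (Fin n)} {i x : Fin n} :
    x ∈ prefixSet w i ↔ w.symm x ≤ i := by
  unfold prefixSet
  simp only [Finset.mem_image, Finset.mem_filter, Finset.mem_univ, true_and]
  constructor
  · rintro ⟨j, hj, rfl⟩; simpa using hj
  · intro h; exact ⟨w.symm x, h, by simp⟩

lemma self_mem_prefixSet {w : Equiv.Perm (Fin n)} {i : Fin n} : w i ∈ prefixSet w i := by
  simp [mem_prefixSet]

lemma prefixSet_mono {w : Equiv.Perm (Fin n)} {i j : Fin n} (h : i ≤ j) :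
    prefixSet w i ⊆ prefixSet w j :=
  fun x hx => mem_prefixSet.2 (le_trans (mem_prefixSet.1 hx) h)

def preLT (w : Equiv.Perm (Fin n)) (i : Fin n) : Finset (Fin n) :=
  (Finset.univ.filter fun j => j < i).image w

lemma mem_preLT {w : Equiv.Perm (Fin n)} {i x : Fin n} :
    x ∈ preLT w i ↔ w.symm x < i := by
  unfold preLT
  simp only [Finset.mem_image, Finset.mem_filter, Finset.mem_univ, true_and]
  constructor
  · rintro ⟨j, hj, rfl⟩; simpa using hj
  · intro h; exact ⟨w.symm x, h, by simp⟩

lemma preLT_subset_prefixSet {w : Equiv.Perm (Fin n)} {i : Fin n} :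
    preLT w i ⊆ prefixSet w i :=
  fun x hx => mem_prefixSet.2 (le_of_lt (mem_preLT.1 hx))

lemma isLinExt_iff {r : Fin n → Fin n → Prop} {w : Equiv.Perm (Fin n)} :
    IsLinExt r w ↔ ∀ a b, r a b → w.symm a ≤ w.symm b := by
  constructor
  · intro h a b hab
    exact h (w.symm a) (w.symm b) (by simpa using hab)
  · intro h i j hij
    simpa using h _ _ hij

/-! lex order machinery -/

def lexLt (w u : Equiv.Perm (Fin n)) : Prop :=
  ∃ i : Fin n, (∀ j : Fin n, j < i → w j = u j) ∧ w i < u i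

lemma lexLt_asymm {w u : Equiv.Perm (Fin n)} (h1 : lexLt w u) (h2 : lexLt u w) : False := by
  obtain ⟨i, hi, hlt⟩ := h1
  obtain ⟨i', hi', hlt'⟩ := h2
  rcases lt_trichotomy i i' with h | h | h
  · rw [hi' i h] at hlt; exact lt_irrefl _ hlt
  · subst h; exact lt_irrefl _ (hlt.trans hlt')
  · rw [hi i' h] at hlt'; exact lt_irrefl _ hlt'

lemma lexLt_trans {w u v : Equiv.Perm (Fin n)} (h1 : lexLt w u) (h2 : lexLt u v) :
    lexLt w v := by
  obtain ⟨i, hi, hlt⟩ := h1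
  obtain ⟨i', hi', hlt'⟩ := h2
  rcases lt_trichotomy i i' with h | h | h
  · exact ⟨i, fun j hj => (hi j hj).trans (hi' j (hj.trans h)), by rw [← hi' i h]; exact hlt⟩
  · subst h; exact ⟨i, fun j hj => (hi j hj).trans (hi' j hj), hlt.trans hlt'⟩
  · exact ⟨i', fun j hj => (hi j (hj.trans h)).trans (hi' j hj), by rw [hi i' h]; exact hlt'⟩

lemma lexLt_total {w u : Equiv.Perm (Fin n)} (h : w ≠ u) : lexLt w u ∨ lexLt u w := by
  have hne : ∃ i, w i ≠ u i := by
    by_contra hc; push_neg at hc; exact h (Equiv.ext hc)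
  set F := Finset.univ.filter (fun i => w i ≠ u i) with hF
  have hFne : F.Nonempty := ⟨hne.choose, by simp [hF, hne.choose_spec]⟩
  set i := F.min' hFne with hidef
  have hiF : i ∈ F := F.min'_mem hFne
  have hagree : ∀ j, j < i → w j = u j := by
    intro j hj; by_contra hcj
    exact absurd (F.min'_le j (by simp [hF, hcj])) (not_le.2 hj)
  have hine : w i ≠ u i := by simpa [hF] using hiF
  rcases lt_or_gt_of_ne hine with h1 | h1
  · exact Or.inl ⟨i, hagree, h1⟩
  · exact Or.inr ⟨i, fun j hj => (hagree j hj).symm, h1⟩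

lemma exists_lexMin (s : Finset (Equiv.Perm (Fin n))) (hs : s.Nonempty) :
    ∃ w ∈ s, ∀ u ∈ s, w = u ∨ lexLt w u := by
  classical
  induction s using Finset.induction_on with
  | empty => exact absurd hs (by simp)
  | @insert a s ha ih =>
    rcases s.eq_empty_or_nonempty with rfl | hne
    · exact ⟨a, by simp, by intro u hu; simp at hu; exact Or.inl hu.symm⟩
    · obtain ⟨w, hws, hmin⟩ := ih hne
      by_cases haw : a = w
      · refine ⟨w, Finset.mem_insert_of_mem hws, ?_⟩
        intro u hu
        rcases Finset.mem_insert.1 hu with rfl | hu'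
        · exact Or.inl haw.symm
        · exact hmin u hu'
      · rcases lexLt_total haw with h1 | h1
        · refine ⟨a, Finset.mem_insert_self a s, ?_⟩
          intro u hu
          rcases Finset.mem_insert.1 hu with rfl | hu'
          · exact Or.inl rfl
          · rcases hmin u hu' with rfl | h2
            · exact Or.inr h1
            · exact Or.inr (lexLt_trans h1 h2)
        · refine ⟨w, Finset.mem_insert_of_mem hws, ?_⟩
          intro u hu
          rcases Finset.mem_insert.1 hu with rfl | hu'
          · exact Or.inr h1
          · exact hmin u hu'


variable {B : Finset (Finset (Fin n))}


lemma sup_mem_B (hB : IsBuildingSet B) {v : Fin n} (s : Finset (Finset (Fin n)))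
    (hsub : ∀ I ∈ s, I ∈ B ∧ v ∈ I) (hne : s.Nonempty) : s.sup id ∈ B := by
  classical
  induction s using Finset.induction_on with
  | empty => exact absurd hne (by simp)
  | @insert a s ha ih =>
    have haB := hsub a (Finset.mem_insert_self a s)
    rcases s.eq_empty_or_nonempty with rfl | hne'
    · simpa using haB.1
    · have hs := ih (fun I hI => hsub I (Finset.mem_insert_of_mem hI)) hne'
      rw [Finset.sup_insert]
      have hvs : v ∈ s.sup id := by
        obtain ⟨I₀, hI₀⟩ := hne'
        exact (Finset.le_sup (f := id) hI₀ : I₀ ⊆ s.sup id) (hsub I₀ (Finset.mem_insert_of_mem hI₀)).2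
      have := hB.2.1 a haB.1 (s.sup id) hs ⟨v, Finset.mem_inter.2 ⟨haB.2, hvs⟩⟩
      simpa [Finset.sup_eq_union] using this

def Dset (B : Finset (Finset (Fin n))) (w : Equiv.Perm (Fin n)) (v : Fin n) : Finset (Fin n) :=
  (B.filter (fun I => v ∈ I ∧ I ⊆ prefixSet w (w.symm v))).sup id

lemma singleton_mem_filterD (hB : IsBuildingSet B) (w : Equiv.Perm (Fin n)) (v : Fin n) :
    {v} ∈ B.filter (fun I => v ∈ I ∧ I ⊆ prefixSet w (w.symm v)) := by
  refine Finset.mem_filter.2 ⟨hB.2.2 v, by simp, ?_⟩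
  intro x hx
  rw [Finset.mem_singleton] at hx
  subst hx
  exact mem_prefixSet.2 (le_refl _)

lemma mem_Dset_self (hB : IsBuildingSet B) (w : Equiv.Perm (Fin n)) (v : Fin n) :
    v ∈ Dset B w v :=
  (Finset.le_sup (f := id) (singleton_mem_filterD hB w v) : ({v} : Finset (Fin n)) ⊆ _)
    (Finset.mem_singleton_self v)

lemma Dset_subset_prefix {w : Equiv.Perm (Fin n)} {v : Fin n} :
    Dset B w v ⊆ prefixSet w (w.symm v) :=
  Finset.sup_le (fun I hI => (Finset.mem_filter.1 hI).2.2)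

lemma subset_Dset {w : Equiv.Perm (Fin n)} {v : Fin n} {I : Finset (Fin n)}
    (hI : I ∈ B) (hvI : v ∈ I) (hsub : I ⊆ prefixSet w (w.symm v)) : I ⊆ Dset B w v :=
  Finset.le_sup (f := id) (Finset.mem_filter.2 ⟨hI, hvI, hsub⟩)

lemma Dset_mem_B (hB : IsBuildingSet B) (w : Equiv.Perm (Fin n)) (v : Fin n) :
    Dset B w v ∈ B :=
  sup_mem_B hB _ (fun I hI => ⟨(Finset.mem_filter.1 hI).1, (Finset.mem_filter.1 hI).2.1⟩)
    ⟨{v}, singleton_mem_filterD hB w v⟩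

lemma pos_le_of_mem_Dset {w : Equiv.Perm (Fin n)} {a b : Fin n} (h : a ∈ Dset B w b) :
    w.symm a ≤ w.symm b :=
  mem_prefixSet.1 (Dset_subset_prefix h)

lemma chain_helper (hB : IsBuildingSet B) {w : Equiv.Perm (Fin n)} {a b c : Fin n}
    (hpos : w.symm b ≤ w.symm c) (hab : a ∈ Dset B w b) (hac : a ∈ Dset B w c) :
    b ∈ Dset B w c := by
  have hU : Dset B w b ∪ Dset B w c ∈ B :=
    hB.2.1 _ (Dset_mem_B hB w b) _ (Dset_mem_B hB w c)
      ⟨a, Finset.mem_inter.2 ⟨hab, hac⟩⟩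
  have hsub : Dset B w b ∪ Dset B w c ⊆ prefixSet w (w.symm c) :=
    Finset.union_subset (Dset_subset_prefix.trans (prefixSet_mono hpos)) Dset_subset_prefix
  have hcU : c ∈ Dset B w b ∪ Dset B w c :=
    Finset.mem_union_right _ (mem_Dset_self hB w c)
  exact (subset_Dset hU hcU hsub) (Finset.mem_union_left _ (mem_Dset_self hB w b))

lemma Dset_union_sub (hB : IsBuildingSet B) {w : Equiv.Perm (Fin n)} {b c : Fin n}
    (h : b ∈ Dset B w c) : Dset B w b ⊆ Dset B w c := by
  have hpos : w.symm b ≤ w.symm c := pos_le_of_mem_Dset h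
  have hU : Dset B w b ∪ Dset B w c ∈ B :=
    hB.2.1 _ (Dset_mem_B hB w b) _ (Dset_mem_B hB w c)
      ⟨b, Finset.mem_inter.2 ⟨mem_Dset_self hB w b, h⟩⟩
  have hsub : Dset B w b ∪ Dset B w c ⊆ prefixSet w (w.symm c) :=
    Finset.union_subset (Dset_subset_prefix.trans (prefixSet_mono hpos)) Dset_subset_prefix
  have hcU : c ∈ Dset B w b ∪ Dset B w c :=
    Finset.mem_union_right _ (mem_Dset_self hB w c)
  exact (Finset.subset_union_left).trans (subset_Dset hU hcU hsub)

lemma union_biUnion_mem_B (hB : IsBuildingSet B) (D : Finset (Fin n)) (hD : D ∈ B)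
    (M : Finset (Fin n)) (f : Fin n → Finset (Fin n))
    (hf : ∀ y ∈ M, f y ∈ B ∧ (f y ∩ D).Nonempty) : D ∪ M.biUnion f ∈ B := by
  classical
  induction M using Finset.induction_on with
  | empty => simpa using hD
  | @insert a M ha ih =>
    rw [Finset.biUnion_insert]
    have h1 : D ∪ f a ∈ B := by
      have := hB.2.1 (f a) (hf a (Finset.mem_insert_self a M)).1 D hD
        (hf a (Finset.mem_insert_self a M)).2
      rwa [Finset.union_comm] at this
    have h2 : D ∪ M.biUnion f ∈ B := ih (fun y hy => hf y (Finset.mem_insert_of_mem hy))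
    have h3 := hB.2.1 _ h1 _ h2 (by
      obtain ⟨x, hx⟩ := hB.1 D hD
      exact ⟨x, Finset.mem_inter.2 ⟨Finset.mem_union_left _ hx, Finset.mem_union_left _ hx⟩⟩)
    have : (D ∪ f a) ∪ (D ∪ M.biUnion f) = D ∪ (f a ∪ M.biUnion f) := by
      ext x; simp only [Finset.mem_union]; tauto
    rwa [this] at h3


lemma isLinExt_T (hB : IsBuildingSet B) (w : Equiv.Perm (Fin n)) :
    IsLinExt (fun a b => a ∈ Dset B w b) w :=
  isLinExt_iff.2 (fun _ _ h => pos_le_of_mem_Dset h)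

lemma isBTree_T (hB : IsBuildingSet B) (hconn : (Finset.univ : Finset (Fin n)) ∈ B)
    (hn : 0 < n) (w : Equiv.Perm (Fin n)) :
    IsBTreeRel B (fun a b => a ∈ Dset B w b) := by
  refine ⟨fun a => mem_Dset_self hB w a, ?_, ?_, ?_, ?_, ?_, ?_⟩
  · intro a b hab hba
    exact w.symm.injective (le_antisymm (pos_le_of_mem_Dset hab) (pos_le_of_mem_Dset hba))
  · intro a b c hab hbc
    exact Dset_union_sub hB hbc hab
  · refine ⟨w ⟨n - 1, by omega⟩, ?_⟩
    intro a
    have hsub : (Finset.univ : Finset (Fin n)) ⊆ prefixSet w (w.symm (w ⟨n - 1, by omega⟩)) := by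
      intro x _
      refine mem_prefixSet.2 ?_
      simp only [Equiv.symm_apply_apply]
      rw [Fin.le_def]
      have := (w.symm x).isLt
      simp only []
      omega
    exact subset_Dset hconn (Finset.mem_univ _) hsub (Finset.mem_univ a)
  · intro a b c hab hac
    rcases le_total (w.symm b) (w.symm c) with h | h
    · exact Or.inl (chain_helper hB h hab hac)
    · exact Or.inr (chain_helper hB h hac hab)
  · intro i
    convert Dset_mem_B hB w i using 1
    ext x; simp
  · intro S hcard hpair hUB0
    have hUB : S.biUnion (fun i => Finset.univ.filter fun j => j ∈ Dset B w i) ∈ B := by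
      convert hUB0 using 1
      ext x; simp
    have hSne : S.Nonempty := Finset.card_pos.1 (by omega)
    obtain ⟨ks, hks, hkmax⟩ := Finset.exists_max_image S (fun x => w.symm x) hSne
    have hUsub : S.biUnion (fun i => Finset.univ.filter fun j => j ∈ Dset B w i)
        ⊆ prefixSet w (w.symm ks) := by
      intro x hx
      obtain ⟨i, hiS, hxi⟩ := Finset.mem_biUnion.1 hx
      have := pos_le_of_mem_Dset (Finset.mem_filter.1 hxi).2
      exact mem_prefixSet.2 (this.trans (hkmax i hiS))
    have hkU : ks ∈ S.biUnion (fun i => Finset.univ.filter fun j => j ∈ Dset B w i) :=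
      Finset.mem_biUnion.2 ⟨ks, hks,
        Finset.mem_filter.2 ⟨Finset.mem_univ _, mem_Dset_self hB w ks⟩⟩
    have hUD := subset_Dset hUB hkU hUsub
    obtain ⟨k, hkS, hkne⟩ := Finset.exists_mem_ne (show 1 < S.card by omega) ks
    have hkD : k ∈ Dset B w ks := hUD (Finset.mem_biUnion.2 ⟨k, hkS,
      Finset.mem_filter.2 ⟨Finset.mem_univ _, mem_Dset_self hB w k⟩⟩)
    exact (hpair k hkS ks hks hkne).1 hkD

lemma eq_T_of_linExt (hB : IsBuildingSet B) {r : Fin n → Fin n → Prop}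
    (hr : IsBTreeRel B r) {w : Equiv.Perm (Fin n)} (hw : IsLinExt r w) (a b : Fin n) :
    r a b ↔ a ∈ Dset B w b := by
  obtain ⟨hrefl, hanti, htrans, hg, hchain, hdown, hac⟩ := hr
  constructor
  · intro hab
    have hsub : (Finset.univ.filter fun z => r z b) ⊆ prefixSet w (w.symm b) := by
      intro z hz
      exact mem_prefixSet.2 (isLinExt_iff.1 hw _ _ (Finset.mem_filter.1 hz).2)
    exact subset_Dset (hdown b) (Finset.mem_filter.2 ⟨Finset.mem_univ _, hrefl b⟩) hsub
      (Finset.mem_filter.2 ⟨Finset.mem_univ _, hab⟩)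
  · intro hab
    set D := Dset B w b with hD
    have hDB : D ∈ B := Dset_mem_B hB w b
    have hDpre : D ⊆ prefixSet w (w.symm b) := Dset_subset_prefix
    have hbD : b ∈ D := mem_Dset_self hB w b
    have hmaxabove : ∀ x ∈ D, ∃ y ∈ D, r x y ∧ ∀ z ∈ D, r y z → z = y := by
      intro x hx
      have hne : (D.filter (fun y => r x y)).Nonempty := ⟨x, Finset.mem_filter.2 ⟨hx, hrefl x⟩⟩
      obtain ⟨y, hy, hymax⟩ := Finset.exists_max_image _ (fun y => w.symm y) hne
      obtain ⟨hyD, hxy⟩ := Finset.mem_filter.1 hy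
      refine ⟨y, hyD, hxy, ?_⟩
      intro z hz hyz
      have hz' : z ∈ D.filter (fun y => r x y) :=
        Finset.mem_filter.2 ⟨hz, htrans _ _ _ hxy hyz⟩
      exact w.symm.injective (le_antisymm (hymax z hz') (isLinExt_iff.1 hw _ _ hyz))
    set M := D.filter (fun y => ∀ z ∈ D, r y z → z = y) with hM
    have hbM : b ∈ M := by
      refine Finset.mem_filter.2 ⟨hbD, ?_⟩
      intro z hz hbz
      exact w.symm.injective
        (le_antisymm (mem_prefixSet.1 (hDpre hz)) (isLinExt_iff.1 hw _ _ hbz))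
    by_cases hMall : ∀ y ∈ M, y = b
    · obtain ⟨y, hyD, hay, hymax⟩ := hmaxabove a hab
      have hyM : y ∈ M := Finset.mem_filter.2 ⟨hyD, hymax⟩
      rw [← hMall y hyM]
      exact hay
    · push_neg at hMall
      obtain ⟨y₀, hy₀M, hy₀ne⟩ := hMall
      have hcard : 2 ≤ M.card := Finset.one_lt_card.2 ⟨b, hbM, y₀, hy₀M, fun h => hy₀ne h.symm⟩
      have hpair : ∀ x ∈ M, ∀ y ∈ M, x ≠ y → ¬ r x y ∧ ¬ r y x := by
        intro x hx y hy hxy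
        obtain ⟨hxD, hxmax⟩ := Finset.mem_filter.1 hx
        obtain ⟨hyD, hymax⟩ := Finset.mem_filter.1 hy
        exact ⟨fun h => hxy (hxmax y hyD h).symm, fun h => hxy (hymax x hxD h)⟩
      exfalso
      apply hac M hcard hpair
      have hDU : D ⊆ M.biUnion (fun i => Finset.univ.filter fun j => r j i) := by
        intro x hx
        obtain ⟨y, hyD, hxy, hym⟩ := hmaxabove x hx
        exact Finset.mem_biUnion.2 ⟨y, Finset.mem_filter.2 ⟨hyD, hym⟩,
          Finset.mem_filter.2 ⟨Finset.mem_univ _, hxy⟩⟩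
      have hUB : D ∪ M.biUnion (fun i => Finset.univ.filter fun j => r j i) ∈ B :=
        union_biUnion_mem_B hB D hDB M _ (fun y hy =>
          ⟨hdown y, ⟨y, Finset.mem_inter.2 ⟨Finset.mem_filter.2 ⟨Finset.mem_univ _, hrefl y⟩,
            (Finset.mem_filter.1 hy).1⟩⟩⟩)
      rwa [Finset.union_eq_right.2 hDU] at hUB

lemma lexmin_greedy {r : Fin n → Fin n → Prop} {w : Equiv.Perm (Fin n)}
    (hw : IsLexMinLinExt r w) (p v : Fin n)
    (hvP : v ∉ preLT w p) (hav : ∀ z, r z v → z = v ∨ z ∈ preLT w p) :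
    w p ≤ v := by
  classical
  set k := w.symm v with hk
  have hvk : w k = v := by rw [hk]; simp
  have hpk : p ≤ k := le_of_not_gt (fun h => hvP (mem_preLT.2 h))
  rcases eq_or_lt_of_le hpk with heq | hlt
  · rw [heq, hvk]
  · have hpkv : (p : ℕ) < (k : ℕ) := hlt
    have hkn := k.isLt
    let φ : Fin n → Fin n := fun t =>
      if (t : ℕ) < (p : ℕ) then t
      else if t = k then p
      else if h : (t : ℕ) < (k : ℕ) then ⟨(t : ℕ) + 1, by omega⟩
      else t
    have hφval : ∀ t : Fin n, ((φ t : Fin n) : ℕ) =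
        if (t : ℕ) < (p : ℕ) then (t : ℕ)
        else if (t : ℕ) = (k : ℕ) then (p : ℕ)
        else if (t : ℕ) < (k : ℕ) then (t : ℕ) + 1
        else (t : ℕ) := by
      intro t
      simp only [φ]
      split_ifs <;> simp_all [Fin.ext_iff]
    have hφinj : Function.Injective φ := by
      intro s t hst
      have h1 := hφval s
      have h2 := hφval t
      rw [hst] at h1
      apply Fin.ext
      split_ifs at h1 h2 <;> omega
    let c : Equiv.Perm (Fin n) := Equiv.ofBijective φ (Finite.injective_iff_bijective.1 hφinj)
    have hc : ∀ t, c t = φ t := fun t => rfl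
    let u : Equiv.Perm (Fin n) := c.symm.trans w
    have hu : IsLinExt r u := by
      rw [isLinExt_iff]
      intro a b hab
      have hab' : ((w.symm a : Fin n) : ℕ) ≤ ((w.symm b : Fin n) : ℕ) :=
        isLinExt_iff.1 hw.1 a b hab
      have hbk : ((w.symm b : Fin n) : ℕ) = (k : ℕ) →
          (((w.symm a : Fin n) : ℕ) = (k : ℕ) ∨ ((w.symm a : Fin n) : ℕ) < (p : ℕ)) := by
        intro h
        have htbk : w.symm b = k := Fin.ext h
        have hbv : b = v := by
          have h5 : w (w.symm b) = w k := congrArg w htbk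
          simpa [hvk] using h5
        rcases hav a (by rwa [hbv] at hab) with h3 | h3
        · left; subst h3; rw [hk]
        · right; exact Fin.lt_def.1 (mem_preLT.1 h3)
      show φ (w.symm a) ≤ φ (w.symm b)
      rw [Fin.le_def]
      have h1 := hφval (w.symm a)
      have h2 := hφval (w.symm b)
      by_cases hb : ((w.symm b : Fin n) : ℕ) = (k : ℕ)
      · rcases hbk hb with h | h <;> (split_ifs at h1 h2 <;> omega)
      · split_ifs at h1 h2 <;> omega
    have hagr : ∀ j : Fin n, j < p → u j = w j := by
      intro j hj
      have hcj : c j = j := by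
        show φ j = j
        simp only [φ]
        rw [if_pos (Fin.lt_def.1 hj)]
      have hcsj : c.symm j = j := by
        conv_lhs => rw [← hcj]
        exact c.symm_apply_apply j
      show w (c.symm j) = w j
      rw [hcsj]
    have hup : u p = v := by
      have hck : c k = p := by
        show φ k = p
        simp only [φ]
        rw [if_neg (by omega)]; simp
      have hcsp : c.symm p = k := by
        rw [← hck]; exact c.symm_apply_apply k
      show w (c.symm p) = v
      rw [hcsp, hvk]
    rcases hw.2 u hu with heq | ⟨i, hag, hlt'⟩
    · rw [heq, hup]
    · rcases lt_trichotomy i p with h | h | h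
      · rw [hagr i h] at hlt'; exact absurd hlt' (lt_irrefl _)
      · subst h; rw [hup] at hlt'; exact hlt'.le
      · rw [hag p h, hup]

lemma lexmin_max_le {r : Fin n → Fin n → Prop} {w : Equiv.Perm (Fin n)}
    (hrefl : ∀ a, r a a) (htrans : ∀ a b c, r a b → r b c → r a c)
    (hw : IsLexMinLinExt r w) :
    ∀ i : Fin n, r ((prefixSet w i).max' ⟨w i, self_mem_prefixSet⟩) (w i) := by
  have key : ∀ N : ℕ, ∀ i : Fin n, (i : ℕ) < N →
      r ((prefixSet w i).max' ⟨w i, self_mem_prefixSet⟩) (w i) := by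
    intro N
    induction N with
    | zero => intro i hi; omega
    | succ N ih =>
      intro i hi
      set m := (prefixSet w i).max' ⟨w i, self_mem_prefixSet⟩ with hm
      have hmmem : m ∈ prefixSet w i := Finset.max'_mem _ _
      by_cases hmw : m = w i
      · rw [hmw]; exact hrefl _
      by_contra hc
      set j := w.symm m with hj
      have hwj : w j = m := by rw [hj]; simp
      have hji : j ≤ i := mem_prefixSet.1 hmmem
      have hjlt : j < i := lt_of_le_of_ne hji (by
        intro h; apply hmw; rw [← hwj, h])
      have hwilt : w i < m :=
        lt_of_le_of_ne (Finset.le_max' _ _ self_mem_prefixSet) (fun h => hmw h.symm)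
      have hnav : ¬ (∀ z, r z (w i) → z = w i ∨ z ∈ preLT w j) := by
        intro hav
        have hvP : w i ∉ preLT w j := by
          rw [mem_preLT]
          simp only [Equiv.symm_apply_apply]
          exact not_lt.2 hjlt.le
        have hle := lexmin_greedy hw j (w i) hvP hav
        rw [hwj] at hle
        exact absurd hle (not_le.2 hwilt)
      push_neg at hnav
      obtain ⟨z, hz, hzne, hznP⟩ := hnav
      set Z := Finset.univ.filter (fun y => r y (w i) ∧ y ≠ w i) with hZ
      have hzZ : z ∈ Z := by simp [hZ, hz, hzne]
      obtain ⟨zs, hzsZ, hzsmax⟩ := Finset.exists_max_image Z (fun y => w.symm y) ⟨z, hzZ⟩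
      have hzsprop : r zs (w i) ∧ zs ≠ w i := by simpa [hZ] using hzsZ
      set kk := w.symm zs with hkk
      have hwkk : w kk = zs := by rw [hkk]; simp
      have hki : kk < i := by
        have h1 : kk ≤ i := by
          have := isLinExt_iff.1 hw.1 zs (w i) hzsprop.1
          simpa [hkk] using this
        refine lt_of_le_of_ne h1 ?_
        intro h
        exact hzsprop.2 (by rw [← hwkk, h])
      have hjk : j ≤ kk := by
        have hz1 : ¬ (w.symm z < j) := fun h => hznP (mem_preLT.2 h)
        have hz2 : w.symm z ≤ kk := hzsmax z hzZ
        exact le_trans (not_lt.1 hz1) hz2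
      have hmk : m ∈ prefixSet w kk := mem_prefixSet.2 (by rw [← hj]; exact hjk)
      have hki' : (kk : ℕ) < (i : ℕ) := hki
      have hIH := ih kk (by omega)
      have hM2 : r ((prefixSet w kk).max' ⟨w kk, self_mem_prefixSet⟩) (w i) :=
        htrans _ _ _ hIH (by rw [hwkk]; exact hzsprop.1)
      have h1 : m ≤ (prefixSet w kk).max' ⟨w kk, self_mem_prefixSet⟩ :=
        Finset.le_max' _ _ hmk
      have h2 : (prefixSet w kk).max' ⟨w kk, self_mem_prefixSet⟩ ≤ m :=
        Finset.le_max' _ _ (prefixSet_mono hki.le (Finset.max'_mem _ _))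
      have heq : (prefixSet w kk).max' ⟨w kk, self_mem_prefixSet⟩ = m := le_antisymm h2 h1
      rw [heq] at hM2
      exact hc hM2
  intro i
  exact key n i i.isLt

lemma exists_linExt {r : Fin n → Fin n → Prop} (hrefl : ∀ a, r a a)
    (hanti : ∀ a b, r a b → r b a → a = b)
    (htrans : ∀ a b c, r a b → r b c → r a c) :
    ∃ w : Equiv.Perm (Fin n), IsLinExt r w := by
  classical
  haveI hpo : IsPartialOrder (Fin n) r :=
    { refl := hrefl
      trans := htrans
      antisymm := hanti }
  obtain ⟨le2, hle2, hrs⟩ := extend_partialOrder r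
  haveI : IsLinearOrder (Fin n) le2 := hle2
  haveI : DecidableRel le2 := fun a b => Classical.dec _
  have hlen : (Finset.sort (Finset.univ : Finset (Fin n)) le2).length = n := by
    rw [Finset.length_sort]; simp
  let f : Fin n → Fin n := fun i => (Finset.sort Finset.univ le2).get (Fin.cast hlen.symm i)
  have hinj : Function.Injective f := by
    intro a b hab
    have hnd := Finset.sort_nodup (Finset.univ : Finset (Fin n)) le2
    have h2 := (List.Nodup.get_inj_iff hnd).1 hab
    have h3 : (a : ℕ) = (b : ℕ) := by simpa [Fin.ext_iff] using h2
    exact Fin.ext h3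
  refine ⟨Equiv.ofBijective f (Finite.injective_iff_bijective.1 hinj), ?_⟩
  intro i j hij
  by_contra hij'
  push_neg at hij'
  have hsort := Finset.pairwise_sort (Finset.univ : Finset (Fin n)) le2
  have h1 : le2 (f j) (f i) :=
    hsort.rel_get_of_lt (a := Fin.cast hlen.symm j) (b := Fin.cast hlen.symm i)
      (by exact hij')
  have h2 : le2 (f i) (f j) := hrs _ _ hij
  have h3 : f i = f j := antisymm h2 h1
  have h4 : i = j := hinj h3
  rw [h4] at hij'
  exact lt_irrefl _ hij'

lemma existsUnique_lexmin {r : Fin n → Fin n → Prop}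
    (hex : ∃ w : Equiv.Perm (Fin n), IsLinExt r w) :
    ∃! w : Equiv.Perm (Fin n), IsLexMinLinExt r w := by
  classical
  set s := Finset.univ.filter (fun w : Equiv.Perm (Fin n) => IsLinExt r w) with hs
  obtain ⟨w0, hw0⟩ := hex
  have hsne : s.Nonempty := ⟨w0, Finset.mem_filter.2 ⟨Finset.mem_univ _, hw0⟩⟩
  obtain ⟨w, hws, hmin⟩ := exists_lexMin s hsne
  have hwlin : IsLinExt r w := (Finset.mem_filter.1 hws).2
  have hlm : IsLexMinLinExt r w :=
    ⟨hwlin, fun u hu => hmin u (Finset.mem_filter.2 ⟨Finset.mem_univ _, hu⟩)⟩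
  refine ⟨w, hlm, ?_⟩
  rintro u ⟨hul, humin⟩
  rcases humin w hwlin with h | h
  · exact h
  · rcases hmin u (Finset.mem_filter.2 ⟨Finset.mem_univ _, hul⟩) with h' | h'
    · exact h'.symm
    · exact (lexLt_asymm h' h).elim

lemma bperm_lexmin (hB : IsBuildingSet B) {w : Equiv.Perm (Fin n)} (hw : IsBPerm B w) :
    IsLexMinLinExt (fun a b => a ∈ Dset B w b) w := by
  classical
  refine ⟨isLinExt_T hB w, ?_⟩
  intro u hu
  by_cases h : w = u
  · exact Or.inl h
  right
  set F := Finset.univ.filter (fun i => w i ≠ u i) with hF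
  have hFne : F.Nonempty := by
    by_contra hemp
    rw [Finset.not_nonempty_iff_eq_empty] at hemp
    apply h; apply Equiv.ext; intro i
    by_contra hc
    have hiF : i ∈ F := by simp [hF, hc]
    rw [hemp] at hiF; simp at hiF
  set i := F.min' hFne with hidef
  have hine : w i ≠ u i := by
    have := F.min'_mem hFne
    simpa [hF] using this
  have hagree : ∀ j, j < i → w j = u j := by
    intro j hj; by_contra hc
    exact absurd (F.min'_le j (by simp [hF, hc])) (not_le.2 hj)
  refine ⟨i, hagree, ?_⟩
  rcases lt_or_gt_of_ne hine with h1 | h1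
  · exact h1
  exfalso
  set v := u i with hv
  have hPu : preLT u i = preLT w i := by
    ext x
    unfold preLT
    simp only [Finset.mem_image, Finset.mem_filter, Finset.mem_univ, true_and]
    constructor
    · rintro ⟨j, hj, rfl⟩; exact ⟨j, hj, hagree j hj⟩
    · rintro ⟨j, hj, rfl⟩; exact ⟨j, hj, (hagree j hj).symm⟩
  have hvP : v ∉ preLT w i := by
    rw [← hPu, mem_preLT, hv]
    simp
  have hav : ∀ z, z ∈ Dset B w v → z = v ∨ z ∈ preLT w i := by
    intro z hz
    by_cases hzv : z = v
    · exact Or.inl hzv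
    right
    rw [← hPu, mem_preLT]
    have h2 : u.symm z ≤ u.symm v := isLinExt_iff.1 hu z v hz
    have h3 : u.symm v = i := by rw [hv]; simp
    refine lt_of_le_of_ne (h3 ▸ h2) ?_
    intro hh
    exact hzv (u.symm.injective (hh.trans h3.symm))
  have hwiP : w i ∉ preLT w i := by rw [mem_preLT]; simp
  have hwiv : w i ≠ v := hine
  set kk := w.symm v with hkk
  have hwkk : w kk = v := by rw [hkk]; simp
  have hki : i < kk := by
    have h1k : i ≤ kk := le_of_not_gt (fun hlt2 => hvP (mem_preLT.2 hlt2))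
    refine lt_of_le_of_ne h1k ?_
    intro hh
    exact hwiv (by rw [← hwkk, ← hh])
  obtain ⟨I, hIB, hIsub, hvI, Mk, hMkI, hMkmax⟩ := hw kk
  rw [hwkk] at hvI
  have hID : I ⊆ Dset B w v := subset_Dset hIB hvI (by rw [← hkk]; exact hIsub)
  have hMkD : Mk ∈ Dset B w v := hID hMkI
  have hwiMk : w i ≤ Mk := hMkmax (w i) (mem_prefixSet.2 (by simpa using hki.le))
  have hMkP : Mk ∈ preLT w i := by
    rcases hav Mk hMkD with h2 | h2
    · exfalso
      rw [h2] at hwiMk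
      exact absurd hwiMk (not_le.2 h1)
    · exact h2
  obtain ⟨I', hI'B, hI'sub, hwI', Mi, hMiI', hMimax⟩ := hw i
  have hI'D : I' ⊆ Dset B w (w i) := subset_Dset hI'B hwI' (by simpa using hI'sub)
  have hMkMi : Mk = Mi := le_antisymm
    (hMimax Mk (preLT_subset_prefixSet hMkP))
    (hMkmax Mi (prefixSet_mono hki.le (hI'sub hMiI')))
  have hMD1 : Mi ∈ Dset B w (w i) := hI'D hMiI'
  have hMD2 : Mi ∈ Dset B w v := by rw [← hMkMi]; exact hMkD
  have hchain : w i ∈ Dset B w v := by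
    apply chain_helper hB ?_ hMD1 hMD2
    show w.symm (w i) ≤ w.symm v
    rw [← hkk]
    simpa using hki.le
  rcases hav (w i) hchain with h2 | h2
  · exact hwiv h2
  · exact hwiP h2

end BTreeAux

/-- For a connected building set `B` on `[n]`:
(a) every `B`-tree has a unique lexicographically minimal linear extension,
which is a `B`-permutation; (b) distinct `B`-trees have distinct
lexicographically minimal linear extensions; (c) every `B`-permutation is the
lexicographically minimal linear extension of some `B`-tree.  In particular,
the `B`-trees are in bijection with the `B`-permutations. -/
theorem btree_bperm_bijection (n : ℕ) (B : Finset (Finset (Fin n)))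
    (hB : IsBuildingSet B) (hconn : (Finset.univ : Finset (Fin n)) ∈ B) :
    (∀ r : Fin n → Fin n → Prop, IsBTreeRel B r →
        (∃! w : Equiv.Perm (Fin n), IsLexMinLinExt r w) ∧
        (∀ w : Equiv.Perm (Fin n), IsLexMinLinExt r w → IsBPerm B w)) ∧
    (∀ r r' : Fin n → Fin n → Prop, IsBTreeRel B r → IsBTreeRel B r' →
        ∀ w : Equiv.Perm (Fin n), IsLexMinLinExt r w → IsLexMinLinExt r' w →
        ∀ a b : Fin n, r a b ↔ r' a b) ∧
    (∀ w : Equiv.Perm (Fin n), IsBPerm B w →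
        ∃ r : Fin n → Fin n → Prop, IsBTreeRel B r ∧ IsLexMinLinExt r w) := by
  classical
  rcases Nat.eq_zero_or_pos n with hn0 | hn
  · exfalso
    obtain ⟨x, -⟩ := hB.1 _ hconn
    subst hn0
    exact x.elim0
  refine ⟨?_, ?_, ?_⟩
  · intro r hr
    obtain ⟨hrefl, hanti, htrans, hg, hchain, hdown, hac⟩ := hr
    refine ⟨BTreeAux.existsUnique_lexmin (BTreeAux.exists_linExt hrefl hanti htrans), ?_⟩
    intro w hw i
    refine ⟨Finset.univ.filter (fun z => r z (w i)), hdown (w i), ?_, ?_, ?_⟩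
    · intro z hz
      exact BTreeAux.mem_prefixSet.2
        (by simpa using BTreeAux.isLinExt_iff.1 hw.1 z (w i) (Finset.mem_filter.1 hz).2)
    · exact Finset.mem_filter.2 ⟨Finset.mem_univ _, hrefl _⟩
    · exact ⟨(prefixSet w i).max' ⟨w i, BTreeAux.self_mem_prefixSet⟩,
        Finset.mem_filter.2 ⟨Finset.mem_univ _,
          BTreeAux.lexmin_max_le hrefl htrans hw i⟩,
        fun x hx => Finset.le_max' _ _ hx⟩
  · intro r r' hr hr' w hww hww' a b
    rw [BTreeAux.eq_T_of_linExt hB hr hww.1 a b, BTreeAux.eq_T_of_linExt hB hr' hww'.1 a b]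
  · intro w hw
    exact ⟨fun a b => a ∈ BTreeAux.Dset B w b, BTreeAux.isBTree_T hB hconn hn w,
      BTreeAux.bperm_lexmin hB hw⟩
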